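/- For n ≥ 1, the number of Fishburn permutations of length n avoiding the classical pattern 321 and the classical pattern 132 equals n. -/

import Mathlib

/-- A permutation `π` of `Fin n` contains the classical pattern `p` (given as a
function `Fin k → ℕ` listing the pattern's entries). -/
def Contains {n k : ℕ} (π : Equiv.Perm (Fin n)) (p : Fin k → ℕ) : Prop :=
  ∃ f : Fin k → Fin n, StrictMono f ∧ ∀ i j, p i < p j ↔ π (f i) < π (f j)

/-- Classical pattern avoidance. -/
def Avoids {n k : ℕ} (π : Equiv.Perm (Fin n)) (p : Fin k → ℕ) : Prop :=
  ¬ Contains π p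

/-- A permutation is Fishburn if there are no indices `i < j` with
`π i, π (i+1), π j` forming a 231 pattern and `π i = π j + 1`. -/
def IsFishburn {n : ℕ} (π : Equiv.Perm (Fin n)) : Prop :=
  ¬ ∃ (i j : ℕ) (hij : i + 1 < j) (hj : j < n),
      π ⟨i, by omega⟩ < π ⟨i + 1, by omega⟩ ∧
      π ⟨j, hj⟩ < π ⟨i, by omega⟩ ∧
      (π ⟨i, by omega⟩ : ℕ) = (π ⟨j, hj⟩ : ℕ) + 1

set_option maxHeartbeats 1000000

/-- tail of π is strictly increasing -/
def TailMono {n : ℕ} (π : Equiv.Perm (Fin n)) : Prop :=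
  ∀ a b : Fin n, 1 ≤ (a : ℕ) → a < b → π a < π b

lemma contains132 {n : ℕ} (π : Equiv.Perm (Fin n)) {a b c : Fin n}
    (hab : a < b) (hbc : b < c) (h1 : π a < π c) (h2 : π c < π b) :
    Contains π ![1, 3, 2] := by
  refine ⟨![a, b, c], ?_, ?_⟩
  · intro i j hij
    fin_cases i <;> fin_cases j <;> simp_all <;> omega
  · intro i j
    have h3 : π a < π b := h1.trans h2
    fin_cases i <;> fin_cases j <;> simp <;> omega

lemma contains321 {n : ℕ} (π : Equiv.Perm (Fin n)) {a b c : Fin n}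
    (hab : a < b) (hbc : b < c) (h1 : π c < π b) (h2 : π b < π a) :
    Contains π ![3, 2, 1] := by
  refine ⟨![a, b, c], ?_, ?_⟩
  · intro i j hij
    fin_cases i <;> fin_cases j <;> simp_all <;> omega
  · intro i j
    have h3 : π c < π a := h1.trans h2
    fin_cases i <;> fin_cases j <;> simp <;> omega

lemma mem_of_tailMono {n : ℕ} {π : Equiv.Perm (Fin n)} (h : TailMono π) :
    IsFishburn π ∧ Avoids π ![3, 2, 1] ∧ Avoids π ![1, 3, 2] := by
  refine ⟨?_, ?_, ?_⟩
  · rintro ⟨i, j, hij, hj, h1, h2, h3⟩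
    rcases Nat.eq_zero_or_pos i with hi | hi
    · subst hi
      have := h ⟨1, by omega⟩ ⟨j, hj⟩ le_rfl (by simp [Fin.lt_iff_val_lt_val]; omega)
      exact absurd (this.trans h2) (by exact fun hh => absurd (h1.trans hh) (lt_irrefl _))
    · exact absurd (h ⟨i, by omega⟩ ⟨j, hj⟩ hi (by simp [Fin.lt_iff_val_lt_val]; omega))
        (by exact fun hh => absurd (hh.trans h2) (lt_irrefl _))
  · rintro ⟨f, hf, hiff⟩
    have h01 : f 0 < f 1 := hf (by decide)
    have h12 : f 1 < f 2 := hf (by decide)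
    have hv : π (f 2) < π (f 1) := (hiff 2 1).mp (by decide)
    have : 1 ≤ (f 1 : ℕ) := by
      have := Fin.lt_iff_val_lt_val.mp h01; omega
    exact absurd (h (f 1) (f 2) this h12) (fun hh => absurd (hh.trans hv) (lt_irrefl _))
  · rintro ⟨f, hf, hiff⟩
    have h01 : f 0 < f 1 := hf (by decide)
    have h12 : f 1 < f 2 := hf (by decide)
    have hv : π (f 2) < π (f 1) := (hiff 2 1).mp (by decide)
    have : 1 ≤ (f 1 : ℕ) := by
      have := Fin.lt_iff_val_lt_val.mp h01; omega
    exact absurd (h (f 1) (f 2) this h12) (fun hh => absurd (hh.trans hv) (lt_irrefl _))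

lemma adj_of_mem {n : ℕ} {π : Equiv.Perm (Fin n)}
    (hF : IsFishburn π) (h321 : Avoids π ![3, 2, 1]) (h132 : Avoids π ![1, 3, 2]) :
    ∀ c : ℕ, 1 ≤ c → ∀ (hc : c + 1 < n), π ⟨c, by omega⟩ < π ⟨c + 1, hc⟩ := by
  intro c hc1 hc
  by_contra hcon
  have hn2 : 1 < n := by omega
  have h0n : 0 < n := by omega
  have hcn : c < n := by omega
  have hdesc : π ⟨c + 1, hc⟩ < π ⟨c, hcn⟩ := by
    rcases lt_trichotomy (π ⟨c + 1, hc⟩) (π ⟨c, hcn⟩) with h | h | h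
    · exact h
    · exact absurd (π.injective h) (by simp [Fin.ext_iff])
    · exact absurd h hcon
  have hzc : (⟨0, h0n⟩ : Fin n) < (⟨c, hcn⟩ : Fin n) := Fin.mk_lt_mk.mpr (by omega)
  have hcc : (⟨c, hcn⟩ : Fin n) < ⟨c + 1, hc⟩ := Fin.mk_lt_mk.mpr (by omega)
  have hA : ¬ π ⟨0, h0n⟩ < π ⟨c + 1, hc⟩ := fun hh =>
    h132 (contains132 π hzc hcc hh hdesc)
  have hB : ¬ π ⟨c, hcn⟩ < π ⟨0, h0n⟩ := fun hh =>
    h321 (contains321 π hzc hcc hdesc hh)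
  have hzgt : π ⟨c + 1, hc⟩ < π ⟨0, h0n⟩ := by
    rcases lt_trichotomy (π ⟨c + 1, hc⟩) (π ⟨0, h0n⟩) with h | h | h
    · exact h
    · exact absurd (π.injective h) (by simp [Fin.ext_iff])
    · exact absurd h hA
  have hzlt : π ⟨0, h0n⟩ < π ⟨c, hcn⟩ := by
    rcases lt_trichotomy (π ⟨0, h0n⟩) (π ⟨c, hcn⟩) with h | h | h
    · exact h
    · exact absurd (π.injective h) (by simp [Fin.ext_iff]; omega)
    · exact absurd h hB
  have hzpos : 1 ≤ (π ⟨0, h0n⟩ : ℕ) := by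
    have := Fin.lt_iff_val_lt_val.mp hzgt; omega
  rcases lt_trichotomy (π ⟨0, h0n⟩) (π ⟨1, hn2⟩) with hcase | hcase | hcase
  · -- ascent at 0, use Fishburn
    obtain ⟨j, hπj⟩ : ∃ j : Fin n, (π j : ℕ) = (π ⟨0, h0n⟩ : ℕ) - 1 :=
      ⟨π.symm ⟨(π ⟨0, h0n⟩ : ℕ) - 1, by omega⟩, by rw [Equiv.apply_symm_apply]⟩
    have hjne0 : (j : ℕ) ≠ 0 := by
      intro e
      have : j = ⟨0, h0n⟩ := Fin.ext e
      rw [this] at hπj; omega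
    have hjne1 : (j : ℕ) ≠ 1 := by
      intro e
      have : j = ⟨1, hn2⟩ := Fin.ext e
      rw [this] at hπj
      have := Fin.lt_iff_val_lt_val.mp hcase; omega
    apply hF
    refine ⟨0, (j : ℕ), by omega, j.isLt, ?_, ?_, ?_⟩
    · exact hcase
    · simp only [Fin.eta]
      exact Fin.lt_iff_val_lt_val.mpr (by omega)
    · simp only [Fin.eta]; omega
  · exact absurd (π.injective hcase) (by simp [Fin.ext_iff])
  · -- π ⟨1⟩ < π ⟨0⟩ : need c ≥ 2
    have hc2 : 2 ≤ c := by
      by_contra hh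
      have hc1' : c = 1 := by omega
      subst hc1'
      exact absurd (hcase.trans hzlt) (lt_irrefl _)
    have hoc : (⟨1, hn2⟩ : Fin n) < (⟨c, hcn⟩ : Fin n) := Fin.mk_lt_mk.mpr (by omega)
    have hzo : (⟨0, h0n⟩ : Fin n) < (⟨1, hn2⟩ : Fin n) := Fin.mk_lt_mk.mpr (by omega)
    rcases lt_trichotomy (π ⟨1, hn2⟩) (π ⟨c + 1, hc⟩) with hd | hd | hd
    · exact h132 (contains132 π hoc hcc hd hdesc)
    · exact absurd (π.injective hd) (by simp [Fin.ext_iff]; omega)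
    · exact h321 (contains321 π hzo (hoc.trans hcc) hd hcase)

lemma tailMono_of_mem {n : ℕ} {π : Equiv.Perm (Fin n)}
    (hF : IsFishburn π) (h321 : Avoids π ![3, 2, 1]) (h132 : Avoids π ![1, 3, 2]) :
    TailMono π := by
  have key : ∀ k : ℕ, ∀ a : ℕ, 1 ≤ a → ∀ (h : a + k + 1 < n),
      π ⟨a, by omega⟩ < π ⟨a + k + 1, h⟩ := by
    intro k
    induction k with
    | zero => intro a ha h; exact adj_of_mem hF h321 h132 a ha h
    | succ k ih =>
      intro a ha h
      have h1 := ih a ha (by omega)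
      have h2 := adj_of_mem hF h321 h132 (a + k + 1) (by omega) (by omega)
      have : π ⟨a + k + 1 + 1, by omega⟩ = π ⟨a + (k+1) + 1, h⟩ := by
        congr 1
      rw [← this]
      exact h1.trans h2
  intro a b ha hab
  have hlt := Fin.lt_iff_val_lt_val.mp hab
  have := key ((b : ℕ) - (a : ℕ) - 1) (a : ℕ) ha (by omega)
  have e1 : (⟨(a : ℕ), by omega⟩ : Fin n) = a := Fin.eta a _
  have e2 : (⟨(a : ℕ) + ((b : ℕ) - (a : ℕ) - 1) + 1, by omega⟩ : Fin n) = b := by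
    apply Fin.ext; simp; omega
  rwa [e1, e2] at this

lemma eq_of_tailMono {n : ℕ} (hn : 1 ≤ n) {π σ : Equiv.Perm (Fin n)}
    (hπ : TailMono π) (hσ : TailMono σ) (h0 : π ⟨0, hn⟩ = σ ⟨0, hn⟩) : π = σ := by
  set f : Fin (n - 1) → Fin n := fun k => π ⟨(k : ℕ) + 1, by omega⟩ with hf
  set g : Fin (n - 1) → Fin n := fun k => σ ⟨(k : ℕ) + 1, by omega⟩ with hg
  have hfm : StrictMono f := by
    intro i j hij
    exact hπ _ _ (Nat.le_add_left 1 _) (by simp only [Fin.mk_lt_mk]; omega)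
  have hgm : StrictMono g := by
    intro i j hij
    exact hσ _ _ (Nat.le_add_left 1 _) (by simp only [Fin.mk_lt_mk]; omega)
  have hrange : ∀ (τ : Equiv.Perm (Fin n)),
      Set.range (fun k : Fin (n-1) => τ ⟨(k : ℕ) + 1, by omega⟩) = {x | x ≠ τ ⟨0, hn⟩} := by
    intro τ
    ext x
    constructor
    · rintro ⟨k, rfl⟩
      simp only [Set.mem_setOf_eq]
      intro hh
      exact absurd (τ.injective hh) (by simp [Fin.ext_iff])
    · intro hx
      simp only [Set.mem_setOf_eq] at hx
      have hj : τ.symm x ≠ ⟨0, hn⟩ := by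
        intro hh
        apply hx
        rw [← hh, Equiv.apply_symm_apply]
      have hj1 : 1 ≤ (τ.symm x : ℕ) := by
        rcases Nat.eq_zero_or_pos (τ.symm x : ℕ) with hh | hh
        · exact absurd (Fin.ext hh) hj
        · exact hh
      refine ⟨⟨(τ.symm x : ℕ) - 1, by omega⟩, ?_⟩
      simp only
      have : (⟨(τ.symm x : ℕ) - 1 + 1, by omega⟩ : Fin n) = τ.symm x := by
        apply Fin.ext; simp; omega
      rw [this, Equiv.apply_symm_apply]
  have hfg : f = g := by
    apply (StrictMono.range_inj hfm hgm).mp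
    rw [hf, hg, hrange π, hrange σ, h0]
  apply Equiv.ext
  intro i
  rcases Nat.eq_zero_or_pos (i : ℕ) with hi | hi
  · have : i = ⟨0, hn⟩ := Fin.ext hi
    rw [this, h0]
  · have hi2 : (i : ℕ) - 1 < n - 1 := by have := i.isLt; omega
    have := congrFun hfg ⟨(i : ℕ) - 1, hi2⟩
    simp only [hf, hg] at this
    have he : (⟨(i : ℕ) - 1 + 1, by omega⟩ : Fin n) = i := by
      apply Fin.ext; simp; omega
    rwa [he] at this

def sigFun (n : ℕ) (m : Fin n) (i : Fin n) : Fin n :=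
  if (i : ℕ) = 0 then m else if (i : ℕ) ≤ (m : ℕ) then ⟨(i : ℕ) - 1, by omega⟩ else i

lemma sigFun_inj (n : ℕ) (m : Fin n) : Function.Injective (sigFun n m) := by
  intro a b h
  have h' := congrArg Fin.val h
  unfold sigFun at h'
  apply Fin.ext
  split_ifs at h' <;> simp_all <;> omega

noncomputable def sig (n : ℕ) (m : Fin n) : Equiv.Perm (Fin n) :=
  Equiv.ofBijective (sigFun n m) (Finite.injective_iff_bijective.mp (sigFun_inj n m))

lemma sig_apply {n : ℕ} (m : Fin n) (i : Fin n) : sig n m i = sigFun n m i := rfl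

lemma sig_zero {n : ℕ} (hn : 1 ≤ n) (m : Fin n) : sig n m ⟨0, hn⟩ = m := by
  rw [sig_apply]; unfold sigFun; simp

lemma sig_tailMono {n : ℕ} (m : Fin n) : TailMono (sig n m) := by
  intro a b ha hab
  have hlt := Fin.lt_iff_val_lt_val.mp hab
  rw [sig_apply, sig_apply, Fin.lt_iff_val_lt_val]
  unfold sigFun
  simp only [apply_ite Fin.val]
  split_ifs <;> omega

theorem fishburn_321_132 (n : ℕ) (hn : 1 ≤ n) :
    {π : Equiv.Perm (Fin n) | IsFishburn π ∧ Avoids π ![3, 2, 1] ∧ Avoids π ![1, 3, 2]}.ncard = n := by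
  have hset : {π : Equiv.Perm (Fin n) | IsFishburn π ∧ Avoids π ![3, 2, 1] ∧ Avoids π ![1, 3, 2]}
      = Set.range (sig n) := by
    ext π
    constructor
    · rintro ⟨hF, h321, h132⟩
      refine ⟨π ⟨0, hn⟩, ?_⟩
      exact eq_of_tailMono hn (sig_tailMono _) (tailMono_of_mem hF h321 h132)
        (by rw [sig_zero hn])
    · rintro ⟨m, rfl⟩
      exact mem_of_tailMono (sig_tailMono m)
  rw [hset, ← Set.image_univ, Set.ncard_image_of_injective _ ?_, Set.ncard_univ]
  · simp
  · intro m₁ m₂ h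
    have := congrArg (fun τ : Equiv.Perm (Fin n) => τ ⟨0, hn⟩) h
    simpa [sig_zero hn] using this
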